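/- Let μ be a probability measure on a Borel set Ω ⊆ ℝ^m such that ∫|f| dμ < ∞ for every polynomial f of degree ≤ t. Then there exist n with 1 ≤ n ≤ dim 𝒫_t(Ω), points x₁,…,xₙ ∈ supp μ, and weights w₁,…,wₙ > 0 such that ∫ f dμ = Σⱼ wⱼ f(xⱼ) for all polynomials f of degree ≤ t. -/

import Mathlib

open MeasureTheory MvPolynomial

/-- The support of a measure on `ℝ^m`: the set of points all of whose open
neighborhoods have positive measure. -/
def measSupport {m : ℕ} (μ : Measure (Fin m → ℝ)) : Set (Fin m → ℝ) :=
  {y | ∀ U : Set (Fin m → ℝ), IsOpen U → y ∈ U → μ U ≠ 0}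

/-- Restriction of polynomials to functions on `Ω`, as a linear map. -/
noncomputable def polyRestrict {m : ℕ} (Ω : Set (Fin m → ℝ)) :
    MvPolynomial (Fin m) ℝ →ₗ[ℝ] (Ω → ℝ) where
  toFun p := fun x => eval (x : Fin m → ℝ) p
  map_add' p q := by funext x; simp
  map_smul' c p := by funext x; simp

/-- `𝒫_t(Ω)`: the space of restrictions to `Ω` of real polynomials of total degree
at most `t`. -/
noncomputable def polySpace {m : ℕ} (Ω : Set (Fin m → ℝ)) (t : ℕ) : Submodule ℝ (Ω → ℝ) :=
  (MvPolynomial.restrictTotalDegree (Fin m) ℝ t).map (polyRestrict Ω)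

/-- For a convex set with nonempty interior, the interior of the closure is contained
in the interior. -/
lemma aux_interior_closure {E : Type*} [AddCommGroup E] [Module ℝ E]
    [TopologicalSpace E] [IsTopologicalAddGroup E] [ContinuousSMul ℝ E]
    {s : Set E} (hs : Convex ℝ s) {x₀ : E} (hx₀ : x₀ ∈ interior s) :
    interior (closure s) ⊆ interior s := by
  intro y hy
  have hcont : Continuous fun ε : ℝ => y + ε • (y - x₀) := by continuity
  have h0 : y + (0:ℝ) • (y - x₀) ∈ interior (closure s) := by simpa using hy
  have hev : ∀ᶠ ε : ℝ in nhds 0, y + ε • (y - x₀) ∈ interior (closure s) :=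
    hcont.continuousAt.eventually_mem (isOpen_interior.mem_nhds h0)
  obtain ⟨ε, hε, hεmem⟩ : ∃ ε : ℝ, 0 < ε ∧ y + ε • (y - x₀) ∈ interior (closure s) := by
    rcases Metric.eventually_nhds_iff.mp hev with ⟨δ, hδ, h⟩
    exact ⟨δ/2, by positivity, h (by rw [Real.dist_eq, sub_zero, abs_of_pos (by positivity)]; linarith)⟩
  have hz : y + ε • (y - x₀) ∈ closure s := interior_subset hεmem
  have h1ε : (0:ℝ) < 1 + ε := by linarith
  have ha : 0 < ε / (1 + ε) := by positivity
  have hb : (0:ℝ) ≤ 1 / (1 + ε) := by positivity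
  have hab : ε / (1 + ε) + 1 / (1 + ε) = 1 := by field_simp; ring
  have hcombo : (ε / (1 + ε)) • x₀ + (1 / (1 + ε)) • (y + ε • (y - x₀)) = y := by
    match_scalars <;> field_simp <;> ring
  have := hs.combo_interior_closure_mem_interior hx₀ hz ha hb hab
  rwa [hcombo] at this

/-- The complement of the support of a measure is null. -/
lemma measSupport_compl_null {m : ℕ} (μ : Measure (Fin m → ℝ)) :
    μ (measSupport μ)ᶜ = 0 := by
  have hset : (measSupport μ)ᶜ = ⋃₀ {U : Set (Fin m → ℝ) | IsOpen U ∧ μ U = 0} := by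
    ext y
    simp only [Set.mem_compl_iff, measSupport, Set.mem_setOf_eq, Set.mem_sUnion]
    constructor
    · intro h
      push_neg at h
      obtain ⟨U, hU, hyU, hμU⟩ := h
      exact ⟨U, ⟨hU, by simpa using hμU⟩, hyU⟩
    · rintro ⟨U, ⟨hU, hμU⟩, hyU⟩ h
      exact h U hU hyU hμU
  obtain ⟨T, hTc, hTsub, hTeq⟩ :=
    TopologicalSpace.isOpen_sUnion_countable {U : Set (Fin m → ℝ) | IsOpen U ∧ μ U = 0} (fun U hU => hU.1)
  rw [hset, ← hTeq]
  exact (measure_sUnion_null_iff hTc).2 fun U hU => (hTsub hU).2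

/-- Core step: the vector of moments lies in the convex cone generated by the image of
the (full-measure, inside the support) set `A` under the continuous map `Φ`. -/
lemma cone_core {m k : ℕ} (μ : Measure (Fin m → ℝ)) [IsProbabilityMeasure μ]
    (Φ : (Fin m → ℝ) → (Fin k → ℝ)) (hΦc : Continuous Φ)
    (hΦi : ∀ i, Integrable (fun y => Φ y i) μ)
    (A : Set (Fin m → ℝ)) (hA : μ Aᶜ = 0) (hAsupp : A ⊆ measSupport μ)
    (hspan : Submodule.span ℝ (Φ '' A) = ⊤) :
    (fun i => ∫ y, Φ y i ∂μ) ∈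
      (Submodule.span {r : ℝ // 0 ≤ r} (Φ '' A) :
        Submodule {r : ℝ // 0 ≤ r} (Fin k → ℝ)) := by
  classical
  set c : Fin k → ℝ := fun i => ∫ y, Φ y i ∂μ with hc
  set K : Set (Fin k → ℝ) :=
    ((Submodule.span {r : ℝ // 0 ≤ r} (Φ '' A) :
      Submodule {r : ℝ // 0 ≤ r} (Fin k → ℝ)) : Set (Fin k → ℝ)) with hK
  show c ∈ K
  -- basic properties of K
  have hK0 : (0 : Fin k → ℝ) ∈ K := Submodule.zero_mem _
  have hKsmul : ∀ r : ℝ, 0 ≤ r → ∀ v ∈ K, r • v ∈ K := by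
    intro r hr v hv
    exact Submodule.smul_mem _ (⟨r, hr⟩ : {r : ℝ // 0 ≤ r}) hv
  have hKconv : Convex ℝ K := by
    intro x hx y hy a b ha hb hab
    exact Submodule.add_mem _
      (Submodule.smul_mem _ (⟨a, ha⟩ : {r : ℝ // 0 ≤ r}) hx)
      (Submodule.smul_mem _ (⟨b, hb⟩ : {r : ℝ // 0 ≤ r}) hy)
  have hKsub : Φ '' A ⊆ K := Submodule.subset_span
  -- dot product expansion of continuous linear functionals
  have hdot : ∀ (f : (Fin k → ℝ) →L[ℝ] ℝ) (v : Fin k → ℝ),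
      f v = ∑ i, f (fun j => if i = j then 1 else 0) * v i := by
    intro f v
    conv_lhs => rw [pi_eq_sum_univ v, map_sum]
    exact Finset.sum_congr rfl fun i _ => by rw [_root_.map_smul, smul_eq_mul, mul_comm]
  have hfint : ∀ f : (Fin k → ℝ) →L[ℝ] ℝ,
      Integrable (fun y => f (Φ y)) μ ∧ ∫ y, f (Φ y) ∂μ = f c := by
    intro f
    have hfun : (fun y => f (Φ y)) =
        fun y => ∑ i, f (fun j => if i = j then 1 else 0) * Φ y i := by
      funext y; exact hdot f (Φ y)
    constructor
    · rw [hfun]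
      exact integrable_finset_sum _ fun i _ => (hΦi i).const_mul _
    · rw [hfun, integral_finset_sum _ fun i _ => (hΦi i).const_mul _]
      rw [hdot f c]
      exact Finset.sum_congr rfl fun i _ => by rw [integral_const_mul]
  -- Step 1: c is in the closure of K
  have hccl : c ∈ closure K := by
    by_contra h
    obtain ⟨f, s, hfc, hfK⟩ :=
      geometric_hahn_banach_point_closed hKconv.closure isClosed_closure h
    have hs0 : s < 0 := by
      have := hfK 0 (subset_closure hK0)
      simpa using this
    have hfpos : ∀ x ∈ A, 0 ≤ f (Φ x) := by
      intro x hx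
      by_contra hneg
      push_neg at hneg
      have hr : 0 ≤ s / f (Φ x) := div_nonneg_of_nonpos hs0.le hneg.le
      have hmem : (s / f (Φ x)) • Φ x ∈ K :=
        hKsmul _ hr _ (hKsub ⟨x, hx, rfl⟩)
      have := hfK _ (subset_closure hmem)
      rw [_root_.map_smul, smul_eq_mul, div_mul_cancel₀ _ hneg.ne] at this
      exact lt_irrefl _ this
    have hae : 0 ≤ᵐ[μ] fun y => f (Φ y) := by
      have hmem : Aᶜᶜ ∈ MeasureTheory.ae μ := by rwa [MeasureTheory.mem_ae_iff, compl_compl]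
      exact Filter.eventually_of_mem hmem fun y hy => hfpos y (by simpa using hy)
    have h0le : 0 ≤ ∫ y, f (Φ y) ∂μ := integral_nonneg_of_ae hae
    rw [(hfint f).2] at h0le
    linarith
  -- Nonempty interior
  have haff : affineSpan ℝ K = ⊤ := by
    have hne : K.Nonempty := ⟨0, hK0⟩
    rw [AffineSubspace.affineSpan_eq_top_iff_vectorSpan_eq_top_of_nonempty ℝ (Fin k → ℝ) (Fin k → ℝ) hne]
    rw [vectorSpan_def]
    rw [eq_top_iff, ← hspan]
    refine Submodule.span_le.2 ?_
    rintro v ⟨x, hx, rfl⟩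
    refine Submodule.subset_span ?_
    refine ⟨Φ x, hKsub ⟨x, hx, rfl⟩, 0, hK0, ?_⟩
    show Φ x -ᵥ 0 = Φ x
    rw [vsub_eq_sub, sub_zero]
  obtain ⟨x₀, hx₀⟩ : (interior K).Nonempty :=
    hKconv.interior_nonempty_iff_affineSpan_eq_top.2 haff
  -- Step 2: c is in the interior of the closure of K
  have hcint : c ∈ interior (closure K) := by
    by_contra h
    obtain ⟨f, hf⟩ := geometric_hahn_banach_open_point
      (hKconv.closure.interior) isOpen_interior h
    have hx₀' : x₀ ∈ interior (closure K) := interior_mono subset_closure hx₀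
    -- f ≤ f c on closure K
    have hle : ∀ v ∈ closure K, f v ≤ f c := by
      intro v hv
      have htt : Filter.Tendsto (fun θ : ℝ => f (θ • x₀ + (1 - θ) • v))
          (nhdsWithin 0 (Set.Ioi (0:ℝ))) (nhds (f v)) := by
        have hcont : Continuous fun θ : ℝ => f (θ • x₀ + (1 - θ) • v) :=
          f.continuous.comp ((continuous_id.smul continuous_const).add
            ((continuous_const.sub continuous_id).smul continuous_const))
        have h0 : f ((0:ℝ) • x₀ + (1 - (0:ℝ)) • v) = f v := by simp
        rw [← h0]
        exact (hcont.tendsto 0).mono_left nhdsWithin_le_nhds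
      refine le_of_tendsto htt ?_
      have hlt1 : ∀ᶠ θ : ℝ in nhdsWithin 0 (Set.Ioi (0:ℝ)), θ < 1 :=
        ((eventually_lt_nhds (by norm_num : (0:ℝ) < 1)).filter_mono nhdsWithin_le_nhds)
      filter_upwards [self_mem_nhdsWithin, hlt1] with θ hθ hθ1
      have hmem : θ • x₀ + (1 - θ) • v ∈ interior (closure K) :=
        (hKconv.closure).combo_interior_closure_mem_interior hx₀'
          (by rwa [closure_closure] : v ∈ closure (closure K)) hθ
          (by linarith) (by ring)
      exact (hf _ hmem).le
    have h2c : (2:ℝ) • c ∈ closure K := by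
      refine map_mem_closure (continuous_const_smul (2:ℝ)) hccl ?_
      intro w hw
      exact hKsmul 2 (by norm_num) w hw
    have hfc0 : f c = 0 := by
      have h1 := hle _ h2c
      rw [_root_.map_smul, smul_eq_mul] at h1
      have h2 := hle 0 (subset_closure hK0)
      simp only [map_zero] at h2
      linarith
    -- -f vanishes a.e.
    have hnn : 0 ≤ᵐ[μ] fun y => -f (Φ y) := by
      have hmem : Aᶜᶜ ∈ MeasureTheory.ae μ := by rwa [MeasureTheory.mem_ae_iff, compl_compl]
      refine Filter.eventually_of_mem hmem fun y hy => ?_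
      have : f (Φ y) ≤ f c := hle _ (subset_closure (hKsub ⟨y, by simpa using hy, rfl⟩))
      rw [hfc0] at this
      simpa using this
    have hint' : Integrable (fun y => -f (Φ y)) μ := (hfint f).1.neg
    have hzero_ae : (fun y => -f (Φ y)) =ᵐ[μ] 0 := by
      refine (integral_eq_zero_iff_of_nonneg_ae hnn hint').1 ?_
      rw [integral_neg, (hfint f).2, hfc0, neg_zero]
    have hU : μ {y | f (Φ y) ≠ 0} = 0 := by
      have := hzero_ae
      rw [Filter.EventuallyEq, MeasureTheory.ae_iff] at this
      convert this using 2
      ext y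
      simp [neg_eq_zero]
    have hUopen : IsOpen {y | f (Φ y) ≠ 0} :=
      isOpen_compl_singleton.preimage (f.continuous.comp hΦc)
    have hzero : ∀ x ∈ A, f (Φ x) = 0 := by
      intro x hx
      by_contra hne
      exact hAsupp hx _ hUopen hne hU
    have hf0 : (f : (Fin k → ℝ) →ₗ[ℝ] ℝ) = 0 := by
      refine LinearMap.ext_on hspan ?_
      rintro v ⟨x, hx, rfl⟩
      simpa using hzero x hx
    have := hf x₀ hx₀'
    have hfx₀ : f x₀ = 0 := by
      have := LinearMap.congr_fun hf0 x₀
      simpa using this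
    rw [hfx₀, hfc0] at this
    exact lt_irrefl _ this
  -- Step 3: conclude
  exact interior_subset (aux_interior_closure hKconv hx₀ hcint)

/-- Tchakaloff's theorem (Theorem 2.1): a probability measure `μ` on a Borel set
`Ω ⊆ ℝ^m` integrating all polynomials of degree `≤ t` admits a cubature formula of
degree `t` with `1 ≤ n ≤ dim 𝒫_t(Ω)` points in `supp μ ⊆ Ω`. -/
theorem tchakaloff {m t : ℕ} (Ω : Set (Fin m → ℝ)) (hΩ : MeasurableSet Ω)
    (μ : Measure (Fin m → ℝ)) [IsProbabilityMeasure μ] (hμΩ : μ Ωᶜ = 0)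
    (hint : ∀ f : MvPolynomial (Fin m) ℝ, f.totalDegree ≤ t →
      Integrable (fun y => eval y f) μ) :
    ∃ n : ℕ, 1 ≤ n ∧ n ≤ Module.finrank ℝ (polySpace Ω t) ∧
      ∃ (x : Fin n → Fin m → ℝ) (w : Fin n → ℝ),
        (∀ j, x j ∈ Ω ∧ x j ∈ measSupport μ) ∧ (∀ j, 0 < w j) ∧
        ∀ f : MvPolynomial (Fin m) ℝ, f.totalDegree ≤ t →
          ∫ y, eval y f ∂μ = ∑ j, w j * eval (x j) f := by
  classical
  -- The set of "good" points: in Ω and in the support of μ.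
  set A : Set (Fin m → ℝ) := Ω ∩ measSupport μ with hA
  have hAc : μ Aᶜ = 0 := by
    rw [hA, Set.compl_inter]
    exact measure_union_null hμΩ (measSupport_compl_null μ)
  have hAΩ : A ⊆ Ω := Set.inter_subset_left
  have hAs : A ⊆ measSupport μ := Set.inter_subset_right
  have hAne : A.Nonempty := by
    refine nonempty_of_measure_ne_zero (μ := μ) ?_
    intro h0
    have h1 : μ Set.univ ≤ μ A + μ Aᶜ := by
      rw [← Set.union_compl_self A]
      exact measure_union_le _ _
    rw [h0, hAc, measure_univ] at h1
    simp at h1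
  set P := MvPolynomial.restrictTotalDegree (Fin m) ℝ t with hP
  set W' : Submodule ℝ (↥A → ℝ) := P.map (polyRestrict A) with hW'
  haveI : Module.Finite ℝ ↥W' := Module.Finite.map P (polyRestrict A)
  set k := Module.finrank ℝ ↥W' with hkdef
  let b : Module.Basis (Fin k) ℝ ↥W' := Module.finBasis ℝ ↥W'
  have hbmem : ∀ i, ((b i : ↥A → ℝ)) ∈ W' := fun i => (b i).2
  choose q hqP hq using fun i => Submodule.mem_map.mp (hbmem i)
  have hqdeg : ∀ i, (q i).totalDegree ≤ t := fun i =>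
    (MvPolynomial.mem_restrictTotalDegree _ _ _).mp (hqP i)
  set Φ : (Fin m → ℝ) → (Fin k → ℝ) := fun y i => eval y (q i) with hΦ
  have hΦc : Continuous Φ := continuous_pi fun i => MvPolynomial.continuous_eval (q i)
  have hΦi : ∀ i, Integrable (fun y => Φ y i) μ := fun i => hint (q i) (hqdeg i)
  set c : Fin k → ℝ := fun i => ∫ y, Φ y i ∂μ with hc
  -- evaluation of basis functions
  have hq' : ∀ (i : Fin k) (z : ↥A), (W'.subtype (b i)) z = Φ (z : Fin m → ℝ) i := by
    intro i z
    have hbe : W'.subtype (b i) = polyRestrict A (q i) := (hq i).symm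
    rw [hbe]
    rfl
  -- coordinates of a polynomial of degree ≤ t
  have hcoord : ∀ f : MvPolynomial (Fin m) ℝ, f ∈ P →
      ∃ a : Fin k → ℝ, (∀ x, x ∈ A → eval x f = ∑ i, a i * Φ x i) ∧
        ∫ y, eval y f ∂μ = ∑ i, a i * c i := by
    intro f hf
    set g : ↥W' := ⟨polyRestrict A f, Submodule.mem_map_of_mem hf⟩ with hg
    refine ⟨fun i => b.repr g i, ?_, ?_⟩
    · intro x hx
      have hsum : (W'.subtype g) = ∑ i, b.repr g i • (W'.subtype (b i)) := by
        conv_lhs => rw [← b.sum_repr g]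
        rw [map_sum]
        exact Finset.sum_congr rfl fun i _ => by rw [_root_.map_smul]
      have := congrFun hsum ⟨x, hx⟩
      rw [Finset.sum_apply] at this
      have hlhs : (W'.subtype g) ⟨x, hx⟩ = eval x f := rfl
      rw [hlhs] at this
      rw [this]
      exact Finset.sum_congr rfl fun i _ => by
        rw [Pi.smul_apply, smul_eq_mul]
        congr 1
        exact hq' i ⟨x, hx⟩
    · have hpt : ∀ x, x ∈ A → eval x f = ∑ i, b.repr g i * Φ x i := by
        intro x hx
        have hsum : (W'.subtype g) = ∑ i, b.repr g i • (W'.subtype (b i)) := by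
          conv_lhs => rw [← b.sum_repr g]
          rw [map_sum]
          exact Finset.sum_congr rfl fun i _ => by rw [_root_.map_smul]
        have := congrFun hsum ⟨x, hx⟩
        rw [Finset.sum_apply] at this
        have hlhs : (W'.subtype g) ⟨x, hx⟩ = eval x f := rfl
        rw [hlhs] at this
        rw [this]
        exact Finset.sum_congr rfl fun i _ => by
          rw [Pi.smul_apply, smul_eq_mul]
          congr 1
          exact hq' i ⟨x, hx⟩
      have hae : (fun y => eval y f) =ᵐ[μ] fun y => ∑ i, b.repr g i * Φ y i := by
        rw [Filter.EventuallyEq, MeasureTheory.ae_iff]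
        refine measure_mono_null (fun y hy => ?_) hAc
        intro hyA
        exact hy (hpt y hyA)
      rw [integral_congr_ae hae, integral_finset_sum _ fun i _ => (hΦi i).const_mul _]
      exact Finset.sum_congr rfl fun i _ => integral_const_mul _ _
  -- the image of A under Φ spans everything
  have hspan : Submodule.span ℝ (Φ '' A) = ⊤ := by
    by_contra hne
    obtain ⟨φ, hφ0, hφbot⟩ := Submodule.exists_dual_map_eq_bot_of_lt_top
      (lt_of_le_of_ne le_top hne) inferInstance
    have hφv : ∀ v ∈ Φ '' A, φ v = 0 := by
      intro v hv
      have : φ v ∈ (Submodule.span ℝ (Φ '' A)).map φ :=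
        Submodule.mem_map_of_mem (Submodule.subset_span hv)
      rw [hφbot] at this
      simpa using this
    set a : Fin k → ℝ := fun i => φ (fun j => if i = j then 1 else 0) with ha
    have hφdot : ∀ v : Fin k → ℝ, φ v = ∑ i, v i * a i := by
      intro v
      conv_lhs => rw [pi_eq_sum_univ v, map_sum]
      exact Finset.sum_congr rfl fun i _ => by rw [_root_.map_smul, smul_eq_mul]
    have hzero : (∑ i, a i • b i : ↥W') = 0 := by
      have hcoe : ∀ z : ↥A, (W'.subtype (∑ i, a i • b i)) z = 0 := by
        intro z
        rw [map_sum, Finset.sum_apply]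
        have heach : ∀ i ∈ Finset.univ, (W'.subtype (a i • b i)) z
            = Φ (z : Fin m → ℝ) i * a i := by
          intro i _
          rw [_root_.map_smul, Pi.smul_apply, smul_eq_mul, hq' i z]
          ring
        rw [Finset.sum_congr rfl heach, ← hφdot (Φ (z : Fin m → ℝ))]
        exact hφv _ ⟨(z : Fin m → ℝ), z.2, rfl⟩
      have hfun : W'.subtype (∑ i, a i • b i) = 0 := funext hcoe
      exact Subtype.ext hfun
    have hazero : ∀ i, a i = 0 :=
      Fintype.linearIndependent_iff.mp b.linearIndependent a hzero
    apply hφ0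
    refine LinearMap.ext fun v => ?_
    rw [hφdot v]
    simp [hazero]
  -- the moment vector lies in the cone
  have hcmem := cone_core μ Φ hΦc hΦi A hAc hAs hspan
  rw [← hc] at hcmem
  obtain ⟨cf, hcfsupp, hcfsum⟩ := Submodule.mem_span_set.mp hcmem
  set S := cf.support with hS
  have hsum : ∑ v ∈ S, ((cf v : ℝ)) • v = c := by
    rw [← hcfsum]
    rfl
  -- the linear functional given by the constant polynomial 1
  obtain ⟨a₀, h₀x, h₀int⟩ := hcoord 1 (by
    rw [MvPolynomial.mem_restrictTotalDegree]
    simp)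
  have h₀x' : ∀ x ∈ A, ∑ i, a₀ i * Φ x i = 1 := by
    intro x hx
    rw [← h₀x x hx]
    simp
  have h₀c : ∑ i, a₀ i * c i = 1 := by
    rw [← h₀int]
    simp
  set L0 : (Fin k → ℝ) →ₗ[ℝ] ℝ :=
    { toFun := fun v => ∑ i, a₀ i * v i
      map_add' := fun x y => by
        simp only [Pi.add_apply, mul_add]
        rw [Finset.sum_add_distrib]
      map_smul' := fun r x => by
        simp only [Pi.smul_apply, smul_eq_mul, RingHom.id_apply, Finset.mul_sum]
        exact Finset.sum_congr rfl fun i _ => by ring } with hL0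
  have hL0apply : ∀ v, L0 v = ∑ i, a₀ i * v i := fun v => rfl
  -- weights sum to 1
  have hwsum1 : ∑ v ∈ S, ((cf v : ℝ)) = 1 := by
    have h2 : L0 (∑ v ∈ S, ((cf v : ℝ)) • v) = ∑ v ∈ S, ((cf v : ℝ)) * L0 v := by
      rw [map_sum]
      exact Finset.sum_congr rfl fun v _ => by rw [_root_.map_smul, smul_eq_mul]
    rw [hsum] at h2
    calc ∑ v ∈ S, ((cf v : ℝ)) = ∑ v ∈ S, ((cf v : ℝ)) * L0 v := by
          refine Finset.sum_congr rfl fun v hv => ?_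
          obtain ⟨x, hx, rfl⟩ := hcfsupp hv
          rw [hL0apply, h₀x' x hx, mul_one]
      _ = L0 c := h2.symm
      _ = 1 := by rw [hL0apply]; exact h₀c
  -- c is in the convex hull of Φ '' A
  have hconv : c ∈ convexHull ℝ (Φ '' A) := by
    rw [← hsum]
    exact (convex_convexHull ℝ (Φ '' A)).sum_mem (fun v _ => (cf v).2) hwsum1
      (fun v hv => subset_convexHull ℝ _ (hcfsupp hv))
  -- Carathéodory with affine independence
  obtain ⟨ι, hι, z, w, hzrange, hzaff, hwpos, hwsum, hzsum⟩ :=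
    eq_pos_convex_span_of_mem_convexHull hconv
  set n := Fintype.card ι with hn
  haveI hne_ι : Nonempty ι := by
    by_contra hemp
    haveI : IsEmpty ι := not_nonempty_iff.mp hemp
    simp at hwsum
  have hn1 : 1 ≤ n := by
    rw [hn]
    exact Fintype.card_pos_iff.mpr hne_ι
  obtain ⟨i₀⟩ := hne_ι
  have hL0z : ∀ i : ι, L0 (z i) = 1 := by
    intro i
    obtain ⟨x, hx, hxz⟩ := hzrange (Set.mem_range_self i)
    rw [← hxz, hL0apply]
    exact h₀x' x hx
  have hk1 : 1 ≤ k := by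
    by_contra hcon
    push_neg at hcon
    have hk0 : k = 0 := by omega
    have hcontr := hL0z i₀
    rw [hL0apply] at hcontr
    haveI : IsEmpty (Fin k) := by rw [hk0]; infer_instance
    rw [Finset.univ_eq_empty, Finset.sum_empty] at hcontr
    exact one_ne_zero hcontr.symm
  -- bound n ≤ k
  have hnk : n ≤ k := by
    have hvs := hzaff.finrank_vectorSpan (n := n - 1) (by omega)
    have hker : vectorSpan ℝ (Set.range z) ≤ LinearMap.ker L0 := by
      rw [vectorSpan_def]
      refine Submodule.span_le.2 ?_
      rintro u ⟨p1, hp1, p2, hp2, rfl⟩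
      obtain ⟨i1, rfl⟩ := hp1
      obtain ⟨i2, rfl⟩ := hp2
      have : L0 (z i1 -ᵥ z i2) = 0 := by
        rw [vsub_eq_sub, map_sub, hL0z i1, hL0z i2, sub_self]
      simpa using this
    have hrange : LinearMap.range L0 = ⊤ := by
      rw [LinearMap.range_eq_top]
      intro r
      exact ⟨r • z i₀, by rw [_root_.map_smul, smul_eq_mul, hL0z i₀, mul_one]⟩
    have h1 := LinearMap.finrank_range_add_finrank_ker L0
    rw [Module.finrank_fintype_fun_eq_card, Fintype.card_fin, hrange, finrank_top,
      Module.finrank_self] at h1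
    have hle : Module.finrank ℝ ↥(vectorSpan ℝ (Set.range z)) ≤
        Module.finrank ℝ ↥(LinearMap.ker L0) := Submodule.finrank_mono hker
    rw [hvs] at hle
    omega
  -- bound k ≤ dim polySpace
  have hkle : k ≤ Module.finrank ℝ ↥(polySpace Ω t) := by
    set restrLM : (↥Ω → ℝ) →ₗ[ℝ] (↥A → ℝ) :=
      { toFun := fun g z => g ⟨(z : Fin m → ℝ), hAΩ z.2⟩
        map_add' := fun _ _ => rfl
        map_smul' := fun _ _ => rfl } with hrestr
    have hcomp : polyRestrict A = restrLM.comp (polyRestrict Ω) := by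
      refine LinearMap.ext fun f => ?_
      rfl
    have hWeq : W' = (polySpace Ω t).map restrLM := by
      rw [hW', hcomp, polySpace, Submodule.map_comp]
    haveI hfinps : Module.Finite ℝ ↥(polySpace Ω t) :=
      Module.Finite.map (MvPolynomial.restrictTotalDegree (Fin m) ℝ t) (polyRestrict Ω)
    rw [hkdef, hWeq]
    exact Submodule.finrank_map_le restrLM (polySpace Ω t)
  -- construct the points and weights
  set e := (Fintype.equivFin ι).symm with he
  have hch : ∀ j : Fin n, ∃ x, x ∈ A ∧ Φ x = z (e j) := by
    intro j
    obtain ⟨x, hx, hxz⟩ := hzrange (Set.mem_range_self (e j))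
    exact ⟨x, hx, hxz⟩
  choose xs hxsA hxsΦ using hch
  refine ⟨n, hn1, le_trans hnk hkle, xs, fun j => w (e j),
    fun j => ⟨hAΩ (hxsA j), hAs (hxsA j)⟩, fun j => hwpos (e j), ?_⟩
  intro f hdeg
  obtain ⟨a, hax, haint⟩ := hcoord f ((MvPolynomial.mem_restrictTotalDegree _ _ _).mpr hdeg)
  rw [haint]
  have hcoordw : ∀ i, c i = ∑ j : Fin n, w (e j) * z (e j) i := by
    intro i
    have h1 : (∑ i', w i' • z i') i = c i := by rw [hzsum]
    rw [Finset.sum_apply] at h1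
    rw [← h1, ← Equiv.sum_comp e (fun i' => (w i' • z i') i)]
    exact Finset.sum_congr rfl fun j _ => by rw [Pi.smul_apply, smul_eq_mul]
  calc ∑ i, a i * c i
      = ∑ i, a i * ∑ j : Fin n, w (e j) * z (e j) i := by
        exact Finset.sum_congr rfl fun i _ => by rw [hcoordw i]
    _ = ∑ i, ∑ j : Fin n, a i * (w (e j) * z (e j) i) := by
        exact Finset.sum_congr rfl fun i _ => by rw [Finset.mul_sum]
    _ = ∑ j : Fin n, ∑ i, a i * (w (e j) * z (e j) i) := Finset.sum_comm
    _ = ∑ j : Fin n, w (e j) * eval (xs j) f := by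
        refine Finset.sum_congr rfl fun j _ => ?_
        rw [hax (xs j) (hxsA j), hxsΦ j, Finset.mul_sum]
        exact Finset.sum_congr rfl fun i _ => by ring
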